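/- For any prime p, any integer k ≥ 2, and any non-negative integer c, we have F_{p^{2k}+c} ≡ F_{p^{2(k−1)}+c} (mod p^k). -/

import Mathlib

open Polynomial AdjoinRoot

private lemma fibq_monic (R : Type*) [CommRing R] [Nontrivial R] :
    (X ^ 2 - X - 1 : R[X]).Monic := by
  have h : (X ^ 2 - X - 1 : R[X]) = X ^ 2 - (X + C 1) := by
    rw [C_1]; ring
  rw [h]
  exact monic_X_pow_sub (by rw [degree_X_add_C]; decide)

private lemma fibq_degree (R : Type*) [CommRing R] [Nontrivial R] :
    (X ^ 2 - X - 1 : R[X]).degree = 2 := by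
  have h : (X ^ 2 - X - 1 : R[X]) = X ^ 2 + (C (-1) * X + C (-1)) := by
    simp; ring
  rw [h, degree_add_eq_left_of_degree_lt (by
    rw [degree_X_pow]
    exact lt_of_le_of_lt degree_linear_le (by decide)), degree_X_pow]
  rfl

/-- Extraction of coefficients from divisibility in `AdjoinRoot (X^2 - X - 1)`. -/
private lemma coeff_of_dvd {R : Type*} [CommRing R] [Nontrivial R] (m a b : R)
    (h : (AdjoinRoot.of (X ^ 2 - X - 1 : R[X]) m) ∣
      (AdjoinRoot.of (X ^ 2 - X - 1 : R[X]) a * AdjoinRoot.root (X ^ 2 - X - 1 : R[X]) +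
        AdjoinRoot.of (X ^ 2 - X - 1 : R[X]) b)) :
    m ∣ a ∧ m ∣ b := by
  obtain ⟨w, hw⟩ := h
  have hmk : AdjoinRoot.of (X ^ 2 - X - 1 : R[X]) a * AdjoinRoot.root (X ^ 2 - X - 1 : R[X]) +
      AdjoinRoot.of (X ^ 2 - X - 1 : R[X]) b
      = AdjoinRoot.mk (X ^ 2 - X - 1 : R[X]) (C a * X + C b) := by
    rw [map_add, map_mul, mk_C, mk_C, mk_X]
  have hsm : AdjoinRoot.of (X ^ 2 - X - 1 : R[X]) m * w = m • w := by
    rw [Algebra.smul_def, AdjoinRoot.algebraMap_eq]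
  rw [hmk, hsm] at hw
  have hM := congrArg (AdjoinRoot.modByMonicHom (fibq_monic R)) hw
  rw [map_smul, modByMonicHom_mk] at hM
  have hself : (C a * X + C b) %ₘ (X ^ 2 - X - 1 : R[X]) = C a * X + C b := by
    rw [modByMonic_eq_self_iff (fibq_monic R), fibq_degree R]
    exact lt_of_le_of_lt degree_linear_le (by decide)
  rw [hself] at hM
  constructor
  · have h1 := congrArg (fun q => Polynomial.coeff q 1) hM
    simp only [coeff_add, coeff_smul, smul_eq_mul] at h1
    simp only [coeff_C_mul, coeff_X_one, mul_one, coeff_C, one_ne_zero, if_false, add_zero] at h1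
    exact ⟨_, h1⟩
  · have h0 := congrArg (fun q => Polynomial.coeff q 0) hM
    simp only [coeff_add, coeff_smul, smul_eq_mul] at h0
    simp only [coeff_C_mul, coeff_X_zero, mul_zero, coeff_C, if_true, zero_add] at h0
    exact ⟨_, h0⟩

/-- Equality of coefficients in `AdjoinRoot (X^2 - X - 1)`. -/
private lemma coeff_of_eq {R : Type*} [CommRing R] [Nontrivial R] {a b a' b' : R}
    (h : AdjoinRoot.of (X ^ 2 - X - 1 : R[X]) a * AdjoinRoot.root (X ^ 2 - X - 1 : R[X]) +
        AdjoinRoot.of (X ^ 2 - X - 1 : R[X]) b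
      = AdjoinRoot.of (X ^ 2 - X - 1 : R[X]) a' * AdjoinRoot.root (X ^ 2 - X - 1 : R[X]) +
        AdjoinRoot.of (X ^ 2 - X - 1 : R[X]) b') :
    a = a' ∧ b = b' := by
  have h0 : (AdjoinRoot.of (X ^ 2 - X - 1 : R[X]) (0 : R)) ∣
      (AdjoinRoot.of (X ^ 2 - X - 1 : R[X]) (a - a') * AdjoinRoot.root (X ^ 2 - X - 1 : R[X]) +
        AdjoinRoot.of (X ^ 2 - X - 1 : R[X]) (b - b')) := by
    rw [map_sub, map_sub, sub_mul, map_zero]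
    rw [show AdjoinRoot.of (X ^ 2 - X - 1 : R[X]) a * AdjoinRoot.root (X ^ 2 - X - 1 : R[X]) -
      AdjoinRoot.of (X ^ 2 - X - 1 : R[X]) a' * AdjoinRoot.root (X ^ 2 - X - 1 : R[X]) +
      (AdjoinRoot.of (X ^ 2 - X - 1 : R[X]) b - AdjoinRoot.of (X ^ 2 - X - 1 : R[X]) b')
      = (AdjoinRoot.of (X ^ 2 - X - 1 : R[X]) a * AdjoinRoot.root (X ^ 2 - X - 1 : R[X]) +
        AdjoinRoot.of (X ^ 2 - X - 1 : R[X]) b) -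
        (AdjoinRoot.of (X ^ 2 - X - 1 : R[X]) a' * AdjoinRoot.root (X ^ 2 - X - 1 : R[X]) +
        AdjoinRoot.of (X ^ 2 - X - 1 : R[X]) b') from by ring, h, sub_self]
  obtain ⟨h1, h2⟩ := coeff_of_dvd _ _ _ h0
  rw [zero_dvd_iff, sub_eq_zero] at h1 h2
  exact ⟨h1, h2⟩

private lemma root_sq {R : Type*} [CommRing R] :
    (AdjoinRoot.root (X ^ 2 - X - 1 : R[X])) ^ 2 = AdjoinRoot.root (X ^ 2 - X - 1 : R[X]) + 1 := by
  have h := AdjoinRoot.eval₂_root (X ^ 2 - X - 1 : R[X])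
  simp only [eval₂_sub, eval₂_pow, eval₂_X, eval₂_one] at h
  linear_combination h

private lemma fib_lin {R : Type*} [CommRing R] {x : R} (hx : x ^ 2 = x + 1) (n : ℕ) :
    x ^ (n + 1) = (Nat.fib (n + 1) : R) * x + (Nat.fib n : R) := by
  induction n with
  | zero => simp
  | succ n ih =>
    have h : x ^ (n + 2) = x ^ (n + 1) * x := by ring
    rw [h, ih, Nat.fib_add_two]
    push_cast
    linear_combination (Nat.fib (n + 1) : R) * hx

/-- The key base fact: `x ^ (p * (p^2 - 1)) = 1` in `(ZMod p)[X]/(X² - X - 1)`. -/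
private lemma base_pow_eq_one (p : ℕ) (hp : p.Prime) :
    (AdjoinRoot.root (X ^ 2 - X - 1 : (ZMod p)[X])) ^ (p * (p ^ 2 - 1)) = 1 := by
  haveI : Fact p.Prime := ⟨hp⟩
  set B := AdjoinRoot (X ^ 2 - X - 1 : (ZMod p)[X]) with hB
  set x : B := AdjoinRoot.root (X ^ 2 - X - 1 : (ZMod p)[X]) with hxdef
  have hx : x ^ 2 = x + 1 := root_sq
  -- injectivity of `of` hence `CharP B p`
  have hinj : Function.Injective (AdjoinRoot.of (X ^ 2 - X - 1 : (ZMod p)[X])) := by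
    intro u v huv
    have h : AdjoinRoot.of (X ^ 2 - X - 1 : (ZMod p)[X]) 0 * x +
        AdjoinRoot.of (X ^ 2 - X - 1 : (ZMod p)[X]) u
        = AdjoinRoot.of (X ^ 2 - X - 1 : (ZMod p)[X]) 0 * x +
        AdjoinRoot.of (X ^ 2 - X - 1 : (ZMod p)[X]) v := by rw [huv]
    exact (coeff_of_eq h).2
  haveI : CharP B p := charP_of_injective_ringHom hinj p
  rcases hp.eq_two_or_odd' with h2 | hodd
  · -- p = 2
    subst h2
    have h2z : (2 : B) = 0 := by
      have h := CharP.cast_eq_zero B 2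
      exact_mod_cast h
    have hx3 : x ^ 3 = 1 := by
      linear_combination (x + 1) * hx + x * h2z
    rw [show 2 * (2 ^ 2 - 1) = 3 * 2 from rfl, pow_mul, hx3, one_pow]
  · -- p odd
    obtain ⟨r, hr⟩ := hodd
    have hp3 : 3 ≤ p := by
      have := hp.two_le; omega
    set z : B := x ^ (p ^ 2) with hzdef
    have hz2 : z ^ 2 = z + 1 := by
      have h1 : z ^ 2 = (x ^ 2) ^ (p ^ 2) := by
        rw [← pow_mul, ← pow_mul, mul_comm]
      rw [h1, hx, add_pow_char_pow, one_pow]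
    have hs : (2 * x - 1) ^ 2 = 5 := by linear_combination 4 * hx
    have h2eq : AdjoinRoot.of (X ^ 2 - X - 1 : (ZMod p)[X]) (2 : ZMod p) = (2 : B) := by
      rw [show (2 : ZMod p) = ((2 : ℕ) : ZMod p) from by norm_cast, map_natCast]
      norm_cast
    have h5eq : AdjoinRoot.of (X ^ 2 - X - 1 : (ZMod p)[X]) (5 : ZMod p) = (5 : B) := by
      rw [show (5 : ZMod p) = ((5 : ℕ) : ZMod p) from by norm_cast, map_natCast]
      norm_cast
    have h2B : (2 : B) ^ (p ^ 2) = 2 := by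
      have hcard : (2 : ZMod p) ^ (p ^ 2) = 2 := by
        rw [pow_two, pow_mul, ZMod.pow_card, ZMod.pow_card]
      have h := congrArg (AdjoinRoot.of (X ^ 2 - X - 1 : (ZMod p)[X])) hcard
      rwa [map_pow, h2eq] at h
    have hsz : (2 * x - 1) ^ (p ^ 2) = 2 * z - 1 := by
      rw [sub_pow_char_pow, mul_pow, h2B, one_pow, hzdef]
    have h5B : (5 : B) ^ (2 * r ^ 2 + 2 * r + 1) = 5 := by
      have h5card : (5 : ZMod p) ^ (2 * r ^ 2 + 2 * r + 1) = 5 := by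
        by_cases h50 : (5 : ZMod p) = 0
        · rw [h50, zero_pow (by omega)]
        · have h51 : (5 : ZMod p) ^ (2 * r) = 1 := by
            rw [show 2 * r = p - 1 from by omega, ZMod.pow_card_sub_one_eq_one h50]
          calc (5 : ZMod p) ^ (2 * r ^ 2 + 2 * r + 1)
              = ((5 : ZMod p) ^ (2 * r)) ^ (r + 1) * 5 := by
                rw [← pow_mul, ← pow_succ]; congr 1; ring
            _ = 5 := by rw [h51, one_pow, one_mul]
      have h := congrArg (AdjoinRoot.of (X ^ 2 - X - 1 : (ZMod p)[X])) h5card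
      rwa [map_pow, h5eq] at h
    have hm2 : p ^ 2 + 1 = 2 * (2 * r ^ 2 + 2 * r + 1) := by subst hr; ring
    have key : (2 * z - 1) * (2 * x - 1) = 5 := by
      calc (2 * z - 1) * (2 * x - 1) = (2 * x - 1) ^ (p ^ 2) * (2 * x - 1) := by rw [hsz]
        _ = (2 * x - 1) ^ (p ^ 2 + 1) := by rw [← pow_succ]
        _ = ((2 * x - 1) ^ 2) ^ (2 * r ^ 2 + 2 * r + 1) := by rw [← pow_mul, ← hm2]
        _ = 5 := by rw [hs, h5B]
    have h2unit : IsUnit (2 : B) := by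
      have h2ne : (2 : ZMod p) ≠ 0 := by
        intro h
        have hd : p ∣ 2 := by
          have := (ZMod.natCast_eq_zero_iff 2 p).mp (by exact_mod_cast h)
          exact this
        have := Nat.le_of_dvd (by norm_num) hd
        omega
      have hu : IsUnit (2 : ZMod p) := isUnit_iff_ne_zero.mpr h2ne
      have h := (AdjoinRoot.of (X ^ 2 - X - 1 : (ZMod p)[X])).isUnit_map hu
      rwa [h2eq] at h
    have hsq : (z - x) ^ 2 = 0 := by
      have h2 : (2 : B) * ((z - x) ^ 2) = 2 * 0 := by
        rw [mul_zero]
        linear_combination 2 * hz2 + 2 * hx - key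
      exact h2unit.mul_left_cancel h2
    have hzp : (z - x) ^ p = 0 := by
      have h : (z - x) ^ p = (z - x) ^ 2 * (z - x) ^ (p - 2) := by
        rw [← pow_add]
        congr 1
        omega
      rw [h, hsq, zero_mul]
    have hflip : x ^ (p ^ 3) = x ^ p := by
      have h : (z - x) ^ p = z ^ p - x ^ p := sub_pow_char ..
      rw [hzp] at h
      have hz3 : z ^ p = x ^ (p ^ 3) := by
        rw [hzdef, ← pow_mul, ← pow_succ]
      rw [hz3] at h
      exact (sub_eq_zero.mp h.symm)
    have hxu : IsUnit x := IsUnit.of_mul_eq_one (a := x) (x - 1) (by linear_combination hx)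
    have hexp : p * (p ^ 2 - 1) + p = p ^ 3 := by
      have h1 : 1 ≤ p ^ 2 := Nat.one_le_pow _ _ hp.pos
      calc p * (p ^ 2 - 1) + p = p * ((p ^ 2 - 1) + 1) := by ring
        _ = p * p ^ 2 := by rw [Nat.sub_add_cancel h1]
        _ = p ^ 3 := by ring
    have h := hflip
    rw [← hexp, pow_add] at h
    exact (hxu.pow p).mul_left_cancel (by rw [mul_one, mul_comm]; exact h)

theorem fib_prime_even_power_add_cong (p : ℕ) (hp : p.Prime) (k : ℕ) (hk : 2 ≤ k) (c : ℕ) :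
    Nat.fib (p ^ (2 * k) + c) ≡ Nat.fib (p ^ (2 * (k - 1)) + c) [MOD p ^ k] := by
  haveI : Fact p.Prime := ⟨hp⟩
  have hp2 : 4 ≤ p ^ 2 := by
    calc 4 = 2 ^ 2 := by norm_num
    _ ≤ p ^ 2 := Nat.pow_le_pow_left hp.two_le 2
  set x : AdjoinRoot (X ^ 2 - X - 1 : ℤ[X]) := AdjoinRoot.root (X ^ 2 - X - 1 : ℤ[X]) with hxdef
  have hx : x ^ 2 = x + 1 := root_sq
  obtain ⟨m, hm⟩ : ∃ m, p * (p ^ 2 - 1) = m + 1 := by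
    refine ⟨p * (p ^ 2 - 1) - 1, ?_⟩
    have h1 : 0 < p * (p ^ 2 - 1) := Nat.mul_pos hp.pos (by omega)
    omega
  -- extract base congruences mod p
  set xb : AdjoinRoot (X ^ 2 - X - 1 : (ZMod p)[X]) :=
    AdjoinRoot.root (X ^ 2 - X - 1 : (ZMod p)[X]) with hxbdef
  have hxb : xb ^ 2 = xb + 1 := root_sq
  have hbarr : xb ^ (m + 1) = 1 := by rw [← hm]; exact base_pow_eq_one p hp
  have h1 : AdjoinRoot.of (X ^ 2 - X - 1 : (ZMod p)[X]) ((Nat.fib (m + 1) : ZMod p)) * xb +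
      AdjoinRoot.of (X ^ 2 - X - 1 : (ZMod p)[X]) ((Nat.fib m : ZMod p))
      = AdjoinRoot.of (X ^ 2 - X - 1 : (ZMod p)[X]) (0 : ZMod p) * xb +
      AdjoinRoot.of (X ^ 2 - X - 1 : (ZMod p)[X]) (1 : ZMod p) := by
    rw [map_natCast, map_natCast, map_zero, map_one, zero_mul, zero_add,
      ← fib_lin hxb m, hbarr]
  obtain ⟨hA, hB⟩ := coeff_of_eq h1
  have hfib1 : p ∣ Nat.fib (m + 1) := (ZMod.natCast_eq_zero_iff _ p).mp hA
  have hfib2 : (p : ℤ) ∣ (Nat.fib m : ℤ) - 1 := by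
    have h := (ZMod.intCast_zmod_eq_zero_iff_dvd ((Nat.fib m : ℤ) - 1) p).mp (by
      push_cast
      rw [hB, sub_self])
    exact h
  obtain ⟨c1, hc1⟩ : ∃ c1 : ℤ, (Nat.fib (m + 1) : ℤ) = p * c1 := by
    obtain ⟨t, ht⟩ := hfib1
    exact ⟨t, by exact_mod_cast congrArg (Nat.cast : ℕ → ℤ) ht⟩
  obtain ⟨c2, hc2⟩ := hfib2
  -- base divisibility over ℤ
  have hbase : ((p : ℕ) : AdjoinRoot (X ^ 2 - X - 1 : ℤ[X])) ∣ x ^ (m + 1) - 1 := by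
    refine ⟨(c1 : AdjoinRoot (X ^ 2 - X - 1 : ℤ[X])) * x + (c2 : _), ?_⟩
    have e1 : ((Nat.fib (m + 1) : ℤ) : AdjoinRoot (X ^ 2 - X - 1 : ℤ[X]))
        = ((p * c1 : ℤ) : _) := by rw [hc1]
    have e2 : (((Nat.fib m : ℤ) - 1 : ℤ) : AdjoinRoot (X ^ 2 - X - 1 : ℤ[X]))
        = ((p * c2 : ℤ) : _) := by rw [hc2]
    push_cast at e1 e2
    rw [fib_lin hx m]
    linear_combination x * e1 + e2
  have hdvd1 : ((p ^ k : ℕ) : AdjoinRoot (X ^ 2 - X - 1 : ℤ[X])) ∣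
      x ^ ((m + 1) * p ^ (k - 1)) - 1 := by
    have h := dvd_sub_pow_of_dvd_sub hbase (k - 1)
    rw [one_pow, ← pow_mul, show k - 1 + 1 = k from by omega] at h
    exact_mod_cast h
  have hdvd2 : ((p ^ k : ℕ) : AdjoinRoot (X ^ 2 - X - 1 : ℤ[X])) ∣
      x ^ (p ^ (2 * k) - p ^ (2 * (k - 1))) - 1 := by
    have heq : p ^ (2 * k) - p ^ (2 * (k - 1)) = ((m + 1) * p ^ (k - 1)) * p ^ (k - 2) := by
      have hm1 : m + 1 = p ^ 3 - p := by
        have h3 : p ^ 3 = p * p ^ 2 := by ring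
        rw [← hm, Nat.mul_sub, mul_one, h3]
      have e1 : (m + 1) * p ^ (k - 1) * p ^ (k - 2) = (p ^ 3 - p) * p ^ (2 * k - 3) := by
        rw [hm1, mul_assoc, ← pow_add]
        congr 2
        omega
      rw [e1, Nat.sub_mul, ← pow_add, ← pow_succ',
        show 3 + (2 * k - 3) = 2 * k from by omega,
        show 2 * k - 3 + 1 = 2 * (k - 1) from by omega]
    rw [heq, pow_mul]
    calc ((p ^ k : ℕ) : AdjoinRoot (X ^ 2 - X - 1 : ℤ[X]))
        ∣ x ^ ((m + 1) * p ^ (k - 1)) - 1 := hdvd1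
      _ ∣ (x ^ ((m + 1) * p ^ (k - 1))) ^ (p ^ (k - 2)) - 1 := by
          have h := sub_dvd_pow_sub_pow (x ^ ((m + 1) * p ^ (k - 1))) 1 (p ^ (k - 2))
          rwa [one_pow] at h
  obtain ⟨a, ha⟩ : ∃ a, p ^ (2 * k) = a + 1 :=
    ⟨p ^ (2 * k) - 1, by have := Nat.one_le_pow (2 * k) p hp.pos; omega⟩
  obtain ⟨b, hb⟩ : ∃ b, p ^ (2 * (k - 1)) = b + 1 :=
    ⟨p ^ (2 * (k - 1)) - 1, by have := Nat.one_le_pow (2 * (k - 1)) p hp.pos; omega⟩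
  have hle : p ^ (2 * (k - 1)) ≤ p ^ (2 * k) :=
    Nat.pow_le_pow_right hp.pos (by omega)
  have hdiff : ((p ^ k : ℕ) : AdjoinRoot (X ^ 2 - X - 1 : ℤ[X])) ∣
      x ^ ((a + c) + 1) - x ^ ((b + c) + 1) := by
    have heq2 : (a + c) + 1 = ((b + c) + 1) + (p ^ (2 * k) - p ^ (2 * (k - 1))) := by omega
    rw [heq2, pow_add]
    have h : x ^ ((b + c) + 1) * x ^ (p ^ (2 * k) - p ^ (2 * (k - 1))) - x ^ ((b + c) + 1)
        = x ^ ((b + c) + 1) * (x ^ (p ^ (2 * k) - p ^ (2 * (k - 1))) - 1) := by ring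
    rw [h]
    exact hdvd2.mul_left _
  have hof : (AdjoinRoot.of (X ^ 2 - X - 1 : ℤ[X]) ((p ^ k : ℕ) : ℤ)) ∣
      AdjoinRoot.of (X ^ 2 - X - 1 : ℤ[X])
        ((Nat.fib (a + c + 1) : ℤ) - (Nat.fib (b + c + 1) : ℤ)) * x +
      AdjoinRoot.of (X ^ 2 - X - 1 : ℤ[X])
        ((Nat.fib (a + c) : ℤ) - (Nat.fib (b + c) : ℤ)) := by
    rw [eq_intCast, eq_intCast, eq_intCast]
    have e1 := fib_lin hx (a + c)
    have e2 := fib_lin hx (b + c)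
    have h : (((Nat.fib (a + c + 1) : ℤ) - (Nat.fib (b + c + 1) : ℤ) : ℤ)
          : AdjoinRoot (X ^ 2 - X - 1 : ℤ[X])) * x +
        (((Nat.fib (a + c) : ℤ) - (Nat.fib (b + c) : ℤ) : ℤ) : AdjoinRoot (X ^ 2 - X - 1 : ℤ[X]))
        = x ^ ((a + c) + 1) - x ^ ((b + c) + 1) := by
      push_cast
      rw [e1, e2]
      ring
    rw [h]
    exact_mod_cast hdiff
  have hzdvd := (coeff_of_dvd _ _ _ hof).1
  have hgoal : ((p ^ k : ℕ) : ℤ) ∣ (Nat.fib (b + c + 1) : ℤ) - (Nat.fib (a + c + 1) : ℤ) := by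
    have h := hzdvd.neg_right
    rwa [neg_sub] at h
  rw [show p ^ (2 * k) + c = (a + c) + 1 from by omega,
    show p ^ (2 * (k - 1)) + c = (b + c) + 1 from by omega]
  exact (Nat.modEq_iff_dvd).mpr hgoal
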